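/- arXiv:1703.02834 — 2 statements merged into one kernel-verified Lean document; each statement's English description precedes it below -/
import Mathlib

section
/- If u ~ Gamma(s,1) and x ~ N(0,Σ) in R^p are independent, with s>0 and Σ positive semidefinite, then the characteristic function of √u·x equals (1 + (1/2)uᵀΣu)^{-s} for all u in R^p; i.e., √u·x follows a symmetric multivariate generalized Laplace distribution GAL_p(Σ,0,s). -/
open MeasureTheory ProbabilityTheory Matrix
open scoped RealInnerProductSpace

/-- Characteristic function of a measure on a real inner product space. -/
noncomputable def charFn {E : Type*} [NormedAddCommGroup E] [InnerProductSpace ℝ E]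
    [MeasurableSpace E] (m : Measure E) (t : E) : ℂ :=
  ∫ x, Complex.exp (((inner ℝ t x : ℝ) : ℂ) * Complex.I) ∂m

/-- The quadratic form `uᵀ S u`. -/
noncomputable def quadForm {p : ℕ} (S : Matrix (Fin p) (Fin p) ℝ)
    (u : EuclideanSpace ℝ (Fin p)) : ℝ :=
  ∑ i, ∑ j, u i * S i j * u j

/-- The characteristic function of the generalized asymmetric Laplace distribution
`GAL_p(S, μ, s)`: `u ↦ (1 + (1/2) uᵀ S u - i μᵀ u)^(-s)`. -/
noncomputable def galCF {p : ℕ} (S : Matrix (Fin p) (Fin p) ℝ)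
    (μv : EuclideanSpace ℝ (Fin p)) (s : ℝ) (u : EuclideanSpace ℝ (Fin p)) : ℂ :=
  (1 + (1/2 : ℂ) * ((quadForm S u : ℝ) : ℂ)
      - Complex.I * ((∑ i, μv i * u i : ℝ) : ℂ)) ^ (-(s : ℂ))

/-- A measure on `ℝ^p` is the `GAL_p(S, μ, s)` distribution iff it is a probability
measure with the prescribed characteristic function. -/
def IsGAL {p : ℕ} (S : Matrix (Fin p) (Fin p) ℝ) (μv : EuclideanSpace ℝ (Fin p))
    (s : ℝ) (m : Measure (EuclideanSpace ℝ (Fin p))) : Prop :=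
  IsProbabilityMeasure m ∧ ∀ u, charFn m u = galCF S μv s u

/-- A measure on `ℝ^p` is the centered Gaussian `N(0, S)` iff it is a probability
measure with characteristic function `u ↦ exp(-(1/2) uᵀ S u)`. -/
def IsGaussian0 {p : ℕ} (S : Matrix (Fin p) (Fin p) ℝ)
    (m : Measure (EuclideanSpace ℝ (Fin p))) : Prop :=
  IsProbabilityMeasure m ∧
    ∀ u, charFn m u = Complex.exp (-(1/2 : ℂ) * ((quadForm S u : ℝ) : ℂ))

section Aux
open Real Set

lemma quadForm_smul {p : ℕ} (S : Matrix (Fin p) (Fin p) ℝ) (a : ℝ)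
    (t : EuclideanSpace ℝ (Fin p)) : quadForm S (a • t) = a ^ 2 * quadForm S t := by
  unfold quadForm
  rw [Finset.mul_sum]
  refine Finset.sum_congr rfl fun i _ => ?_
  rw [Finset.mul_sum]
  refine Finset.sum_congr rfl fun j _ => ?_
  simp only [PiLp.smul_apply, smul_eq_mul]
  ring

lemma quadForm_nonneg {p : ℕ} {S : Matrix (Fin p) (Fin p) ℝ} (hS : S.PosSemidef)
    (t : EuclideanSpace ℝ (Fin p)) : 0 ≤ quadForm S t := by
  have h := hS.dotProduct_mulVec_nonneg (fun i => t i)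
  simp only [star_trivial, RCLike.re_to_real] at h
  refine le_of_le_of_eq h ?_
  unfold quadForm
  simp only [dotProduct, mulVec, Finset.mul_sum]
  refine Finset.sum_congr rfl fun i _ => Finset.sum_congr rfl fun j _ => by ring


lemma myIntegrableOn {s r : ℝ} (hs : 0 < s) (hr : 1 ≤ r) :
    IntegrableOn (fun v : ℝ => v ^ (s - 1) * Real.exp (-(r * v))) (Ioi (0:ℝ)) := by
  refine (Real.GammaIntegral_convergent hs).mono' ?_ ?_
  · apply Measurable.aestronglyMeasurable
    fun_prop
  · rw [ae_restrict_iff' measurableSet_Ioi]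
    refine ae_of_all _ fun v hv => ?_
    have hv0 : (0:ℝ) < v := hv
    rw [norm_mul, norm_of_nonneg (rpow_nonneg hv0.le _), norm_of_nonneg (exp_pos _).le]
    rw [mul_comm (exp (-v))]
    have h1 : exp (-(r * v)) ≤ exp (-v) := by apply exp_le_exp.mpr; nlinarith
    exact mul_le_mul_of_nonneg_left h1 (rpow_nonneg hv0.le _)

lemma gamma_mgf {s c : ℝ} (hs : 0 < s) (hc : 0 ≤ c) :
    ∫ v, Real.exp (-(c * v)) ∂(gammaMeasure s 1) = (1 + c) ^ (-s) := by
  have hr : (0:ℝ) < 1 + c := by linarith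
  have hint : IntegrableOn (fun v : ℝ => gammaPDFReal s 1 v * Real.exp (-(c * v))) (Ici (0:ℝ)) := by
    rw [integrableOn_Ici_iff_integrableOn_Ioi]
    have : ∀ v ∈ Ioi (0:ℝ), gammaPDFReal s 1 v * Real.exp (-(c * v))
        = (Real.Gamma s)⁻¹ * (v ^ (s - 1) * Real.exp (-((1 + c) * v))) := by
      intro v hv
      have hv0 : (0:ℝ) < v := hv
      simp only [gammaPDFReal, if_pos hv0.le, one_rpow, one_mul, one_div]
      rw [show -((1 + c) * v) = -v + -(c * v) by ring, Real.exp_add]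
      ring
    refine (IntegrableOn.congr_fun ?_ (fun v hv => (this v hv).symm) measurableSet_Ioi)
    exact (myIntegrableOn hs (by linarith)).const_mul _
  have hpdfnn : ∀ v, 0 ≤ gammaPDFReal s 1 v := gammaPDFReal_nonneg hs one_pos
  have hintIio : IntegrableOn (fun v : ℝ => gammaPDFReal s 1 v * Real.exp (-(c * v))) (Iio (0:ℝ)) := by
    refine (integrableOn_congr_fun (fun v hv => ?_) measurableSet_Iio).mpr
      (integrableOn_zero (s := Iio (0:ℝ)))
    have : ¬ (0:ℝ) ≤ v := not_le.mpr hv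
    simp [gammaPDFReal, this]
  have hintall : Integrable (fun v : ℝ => gammaPDFReal s 1 v * Real.exp (-(c * v))) := by
    rw [← integrableOn_univ, ← Iio_union_Ici (a := (0:ℝ))]
    exact hintIio.union hint
  rw [gammaMeasure, integral_eq_lintegral_of_nonneg_ae
    (ae_of_all _ fun v => (exp_pos _).le) (Measurable.aestronglyMeasurable (by fun_prop))]
  have hm : Measurable (gammaPDF s 1) := (measurable_gammaPDFReal s 1).ennreal_ofReal
  rw [lintegral_withDensity_eq_lintegral_mul _ hm (by fun_prop)]
  have hcongr : ∀ v : ℝ, (gammaPDF s 1 * fun v => ENNReal.ofReal (rexp (-(c * v)))) v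
      = ENNReal.ofReal (gammaPDFReal s 1 v * rexp (-(c * v))) := by
    intro v
    simp only [Pi.mul_apply, gammaPDF]
    rw [← ENNReal.ofReal_mul (hpdfnn v)]
  rw [lintegral_congr hcongr,
    ← ofReal_integral_eq_lintegral_ofReal hintall
      (ae_of_all _ fun v => mul_nonneg (hpdfnn v) (exp_pos _).le)]
  rw [ENNReal.toReal_ofReal (integral_nonneg fun v => mul_nonneg (hpdfnn v) (exp_pos _).le)]
  rw [← setIntegral_univ, ← Iio_union_Ici (a := (0:ℝ)),
    setIntegral_union (Iio_disjoint_Ici le_rfl) measurableSet_Ici hintIio hint]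
  have hIio : ∫ v in Iio (0:ℝ), gammaPDFReal s 1 v * rexp (-(c * v)) = 0 := by
    refine integral_eq_zero_of_ae ?_
    filter_upwards [ae_restrict_mem measurableSet_Iio] with v hv
    have : ¬ (0:ℝ) ≤ v := not_le.mpr hv
    simp [gammaPDFReal, this]
  rw [hIio, zero_add, integral_Ici_eq_integral_Ioi]
  have heq : ∀ v ∈ Ioi (0:ℝ), gammaPDFReal s 1 v * Real.exp (-(c * v))
      = (Real.Gamma s)⁻¹ * (v ^ (s - 1) * Real.exp (-((1 + c) * v))) := by
    intro v hv
    have hv0 : (0:ℝ) < v := hv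
    simp only [gammaPDFReal, if_pos hv0.le, one_rpow, one_mul, one_div]
    rw [show -((1 + c) * v) = -v + -(c * v) by ring, Real.exp_add]
    ring
  rw [setIntegral_congr_fun measurableSet_Ioi heq, integral_const_mul,
    Real.integral_rpow_mul_exp_neg_mul_Ioi hs hr]
  rw [one_div, ← Real.rpow_neg_one (1 + c), ← Real.rpow_mul hr.le, neg_one_mul,
    mul_comm ((1 + c) ^ (-s)), ← mul_assoc, inv_mul_cancel₀ (Real.Gamma_pos_of_pos hs).ne',
    one_mul]

lemma gamma_ae_nonneg {s : ℝ} : ∀ᵐ v ∂(gammaMeasure s 1), 0 ≤ v := by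
  rw [ae_iff]
  have h : {v : ℝ | ¬ 0 ≤ v} = Iio 0 := by ext v; simp
  rw [h, gammaMeasure, withDensity_apply _ measurableSet_Iio,
    setLIntegral_congr_fun measurableSet_Iio
      (fun v (hv : v < 0) => gammaPDF_of_neg hv), lintegral_zero]

end Aux

/-- If `u ~ Gamma(s,1)` and `x ~ N(0,Σ)` are independent, `s > 0`, `Σ` PSD, then
`√u · x` has the `GAL_p(Σ, 0, s)` characteristic function. -/
theorem stmt0 {Ω : Type*} [MeasureSpace Ω] [IsProbabilityMeasure (ℙ : Measure Ω)]
    {p : ℕ} (S : Matrix (Fin p) (Fin p) ℝ) (s : ℝ) (hs : 0 < s) (hS : S.PosSemidef)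
    (u : Ω → ℝ) (x : Ω → EuclideanSpace ℝ (Fin p))
    (hu : Measurable u) (hx : Measurable x)
    (hulaw : Measure.map u ℙ = gammaMeasure s 1)
    (hxlaw : IsGaussian0 S (Measure.map x ℙ))
    (hind : IndepFun u x ℙ) :
    ∀ t, charFn (Measure.map (fun ω => Real.sqrt (u ω) • x ω) ℙ) t = galCF S 0 s t := by
  intro t
  have hνprob : IsProbabilityMeasure (Measure.map x ℙ) := hxlaw.1
  have hγprob : IsProbabilityMeasure (gammaMeasure s 1) := isProbabilityMeasure_gammaMeasure hs one_pos
  set ν := Measure.map x ℙ with hν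
  set γ := gammaMeasure s 1 with hγ
  set q := quadForm S t with hqdef
  have hq : 0 ≤ q := quadForm_nonneg hS t
  have hmapf : Measurable fun ω => Real.sqrt (u ω) • x ω :=
    (Real.continuous_sqrt.measurable.comp hu).smul hx
  set F : ℝ × EuclideanSpace ℝ (Fin p) → ℂ :=
    fun z => Complex.exp (((Real.sqrt z.1 * ⟪t, z.2⟫ : ℝ) : ℂ) * Complex.I) with hF
  have hinnermeas : Measurable fun y : EuclideanSpace ℝ (Fin p) => (⟪t, y⟫ : ℝ) :=
    (continuous_const.inner continuous_id).measurable
  have hFmeas : Measurable F := by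
    apply Complex.measurable_exp.comp
    exact (Complex.measurable_ofReal.comp
      ((measurable_fst.sqrt).mul (hinnermeas.comp measurable_snd))).mul measurable_const
  have hFint : Integrable F (γ.prod ν) := by
    refine (integrable_const (1:ℝ)).mono' hFmeas.aestronglyMeasurable
      (ae_of_all _ fun z => ?_)
    simp only [hF]
    rw [Complex.norm_exp_ofReal_mul_I]
  have hprod : Measure.map (fun ω => (u ω, x ω)) ℙ = γ.prod ν :=
    hulaw ▸ (indepFun_iff_map_prod_eq_prod_map_map hu.aemeasurable hx.aemeasurable).mp hind
  have step1 : charFn (Measure.map (fun ω => Real.sqrt (u ω) • x ω) ℙ) t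
      = ∫ z, F z ∂(γ.prod ν) := by
    rw [charFn, integral_map hmapf.aemeasurable (Measurable.aestronglyMeasurable (by
      exact (Complex.measurable_exp.comp ((Complex.measurable_ofReal.comp hinnermeas).mul
        measurable_const))))]
    rw [← hprod, integral_map (hu.prodMk hx).aemeasurable hFmeas.aestronglyMeasurable]
    refine integral_congr_ae (ae_of_all _ fun ω => ?_)
    simp only [hF]
    rw [real_inner_smul_right]
  have step2 : ∫ z, F z ∂(γ.prod ν) = ∫ v, (↑(Real.exp (-(q/2 * v))) : ℂ) ∂γ := by
    rw [integral_prod F hFint]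
    refine integral_congr_ae ?_
    filter_upwards [gamma_ae_nonneg (s := s)] with v hv
    have hin : ∀ y : EuclideanSpace ℝ (Fin p), Real.sqrt v * ⟪t, y⟫ = ⟪Real.sqrt v • t, y⟫ := by
      intro y; rw [real_inner_smul_left]
    have : ∫ y, F (v, y) ∂ν = charFn ν (Real.sqrt v • t) := by
      unfold charFn
      refine integral_congr_ae (ae_of_all _ fun y => ?_)
      simp only [hF]
      rw [hin y]
    rw [this, hxlaw.2]
    rw [quadForm_smul, Real.sq_sqrt hv, ← hqdef, Complex.ofReal_exp]
    congr 1
    push_cast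
    ring
  have step3 : ∫ v, (↑(Real.exp (-(q/2 * v))) : ℂ) ∂γ = ↑((1 + q/2 : ℝ) ^ (-s)) := by
    have h := integral_ofReal (𝕜 := ℂ) (f := fun v => Real.exp (-(q/2 * v))) (μ := γ)
    rw [gamma_mgf hs (by positivity)] at h
    exact h
  rw [step1, step2, step3]
  unfold galCF
  have h0 : (∑ i, (0 : EuclideanSpace ℝ (Fin p)) i * t i : ℝ) = 0 := by simp
  rw [h0, Complex.ofReal_cpow (by positivity)]
  push_cast
  ring_nf
  rfl
end

section
/- Let y ~ N(0,1) and w ~ N(0, φ⁻¹ I_p) be independent, φ>0. Then the random vector ξ = y·w follows the symmetric generalized Laplace distribution GAL_p(2φ⁻¹ I_p, 0, 1/2). -/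
open MeasureTheory ProbabilityTheory Matrix
open scoped RealInnerProductSpace ENNReal NNReal Real

lemma quadForm_smul_one {p : ℕ} (r : ℝ) (u : EuclideanSpace ℝ (Fin p)) :
    quadForm (r • (1 : Matrix (Fin p) (Fin p) ℝ)) u = r * ∑ i, u i ^ 2 := by
  unfold quadForm
  rw [Finset.mul_sum]
  refine Finset.sum_congr rfl fun i _ => ?_
  rw [Finset.sum_eq_single i]
  · simp [Matrix.smul_apply, Matrix.one_apply, sq]; ring
  · intro j _ hj; simp [Matrix.smul_apply, Matrix.one_apply, Ne.symm hj]
  · simp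

lemma gauss_int (c : ℝ) (hc : 0 ≤ c) :
    ∫ x, Real.exp (-(x ^ 2 * c) / 2) ∂(gaussianReal 0 1) = (1 + c) ^ (-(1/2 : ℝ)) := by
  have h1c : (0:ℝ) < 1 + c := by linarith
  rw [gaussianReal_of_var_ne_zero 0 one_ne_zero, gaussianPDF_def]
  have hd : (fun x => ENNReal.ofReal (gaussianPDFReal 0 1 x))
      = fun x => ((gaussianPDFReal 0 1 x).toNNReal : ℝ≥0∞) := rfl
  rw [hd, integral_withDensity_eq_integral_smul
      ((measurable_gaussianPDFReal 0 1).real_toNNReal) _]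
  have : ∀ x : ℝ, (gaussianPDFReal 0 1 x).toNNReal • Real.exp (-(x ^ 2 * c) / 2)
      = (√(2 * π))⁻¹ * Real.exp (-((1 + c)/2) * x ^ 2) := by
    intro x
    rw [NNReal.smul_def, Real.coe_toNNReal _ (gaussianPDFReal_nonneg _ _ _)]
    simp only [gaussianPDFReal, NNReal.coe_one, mul_one, sub_zero, smul_eq_mul]
    rw [mul_assoc, ← Real.exp_add]
    ring_nf
  simp_rw [this]
  rw [integral_const_mul, integral_gaussian]
  rw [div_div_eq_mul_div, div_eq_mul_inv, Real.sqrt_mul (by positivity) (1+c)⁻¹,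
    Real.sqrt_inv, Real.rpow_neg h1c.le, ← Real.sqrt_eq_rpow]
  have h2π : (0:ℝ) < √(2 * π) := Real.sqrt_pos.mpr (by positivity)
  rw [mul_comm π 2, inv_mul_cancel_left₀ h2π.ne']

/-- For `y ~ N(0,1)` and `w ~ N(0, φ⁻¹ I_p)` independent, `y • w` follows
`GAL_p(2 φ⁻¹ I_p, 0, 1/2)`. -/
theorem stmt7 {Ω : Type*} [MeasureSpace Ω] [IsProbabilityMeasure (ℙ : Measure Ω)]
    {p : ℕ} (φ : ℝ) (hφ : 0 < φ)
    (y : Ω → ℝ) (w : Ω → EuclideanSpace ℝ (Fin p))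
    (hy : Measurable y) (hw : Measurable w)
    (hylaw : Measure.map y ℙ = gaussianReal 0 1)
    (hwlaw : IsGaussian0 (φ⁻¹ • (1 : Matrix (Fin p) (Fin p) ℝ)) (Measure.map w ℙ))
    (hind : IndepFun y w ℙ) :
    IsGAL ((2 * φ⁻¹) • (1 : Matrix (Fin p) (Fin p) ℝ)) 0 (1/2)
      (Measure.map (fun ω => y ω • w ω) ℙ) := by
  obtain ⟨hwprob, hwcf⟩ := hwlaw
  set μw := Measure.map w ℙ with hμw
  have hξ : Measurable fun ω => y ω • w ω := hy.smul hw
  refine ⟨Measure.isProbabilityMeasure_map hξ.aemeasurable, fun u => ?_⟩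
  set c : ℝ := φ⁻¹ * ∑ i, u i ^ 2 with hcdef
  have hc0 : 0 ≤ c :=
    mul_nonneg (inv_nonneg.mpr hφ.le) (Finset.sum_nonneg fun i _ => sq_nonneg _)
  have h1c : (0:ℝ) < 1 + c := by linarith
  -- RHS
  have hRHS : galCF ((2 * φ⁻¹) • 1) 0 (1/2) u = ((1 + c : ℝ) : ℂ) ^ (-((1/2 : ℝ) : ℂ)) := by
    unfold galCF
    rw [quadForm_smul_one]
    have h0 : (∑ i, (0 : EuclideanSpace ℝ (Fin p)) i * u i) = 0 := by simp
    rw [h0]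
    congr 1
    rw [hcdef]
    push_cast
    ring
  rw [hRHS]
  -- LHS
  set F : ℝ × EuclideanSpace ℝ (Fin p) → ℂ :=
    fun z => Complex.exp (((inner ℝ u (z.1 • z.2) : ℝ) : ℂ) * Complex.I) with hF
  have hFcont : Continuous F := by
    apply Complex.continuous_exp.comp
    exact (Complex.continuous_ofReal.comp
      (continuous_const.inner (continuous_fst.smul continuous_snd))).mul continuous_const
  have hprod : Measure.map (fun ω => (y ω, w ω)) ℙ = (gaussianReal 0 1).prod μw := by
    rw [← hylaw]
    exact (ProbabilityTheory.indepFun_iff_map_prod_eq_prod_map_map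
      hy.aemeasurable hw.aemeasurable).mp hind
  haveI : IsProbabilityMeasure μw := hwprob
  have hFint : Integrable F ((gaussianReal 0 1).prod μw) := by
    refine Integrable.mono' (integrable_const (1:ℝ)) hFcont.aestronglyMeasurable ?_
    filter_upwards with z
    simp only [hF]
    exact le_of_eq (Complex.norm_exp_ofReal_mul_I _)
  have step1 : charFn (Measure.map (fun ω => y ω • w ω) ℙ) u
      = ∫ z, F z ∂((gaussianReal 0 1).prod μw) := by
    unfold charFn
    rw [integral_map hξ.aemeasurable]
    · rw [← hprod, integral_map (hy.aemeasurable.prodMk hw.aemeasurable)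
        hFcont.aestronglyMeasurable]
    · exact Continuous.aestronglyMeasurable (by
        exact Complex.continuous_exp.comp ((Complex.continuous_ofReal.comp
          (continuous_const.inner continuous_id)).mul continuous_const))
  rw [step1, MeasureTheory.integral_prod F hFint]
  have hinner : ∀ a : ℝ, ∫ x, F (a, x) ∂μw
      = Complex.exp (((-(a ^ 2 * c) / 2 : ℝ) : ℂ)) := by
    intro a
    have h1 : ∀ x : EuclideanSpace ℝ (Fin p),
        (inner ℝ u (a • x) : ℝ) = (inner ℝ (a • u) x : ℝ) := by
      intro x
      rw [real_inner_smul_right, real_inner_smul_left]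
    have : ∫ x, F (a, x) ∂μw = charFn μw (a • u) := by
      unfold charFn
      simp_rw [hF]
      congr 1
      ext x
      rw [h1 x]
    rw [this, hwcf (a • u)]
    congr 1
    have hq : quadForm (φ⁻¹ • (1 : Matrix (Fin p) (Fin p) ℝ)) (a • u) = a ^ 2 * c := by
      rw [quadForm_smul_one]
      have : ∀ i, (a • u) i = a * u i := fun i => rfl
      simp_rw [this, mul_pow, ← Finset.mul_sum, hcdef]
      ring
    rw [hq]
    push_cast
    ring
  simp_rw [hinner]
  have : ∀ a : ℝ, Complex.exp (((-(a ^ 2 * c) / 2 : ℝ) : ℂ))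
      = ((Real.exp (-(a ^ 2 * c) / 2) : ℝ) : ℂ) := fun a => (Complex.ofReal_exp _).symm
  simp_rw [this]
  have hIof : (∫ x : ℝ, ((Real.exp (-(x ^ 2 * c) / 2) : ℝ) : ℂ) ∂(gaussianReal 0 1))
      = ((∫ x : ℝ, Real.exp (-(x ^ 2 * c) / 2) ∂(gaussianReal 0 1) : ℝ) : ℂ) :=
    integral_ofReal
  rw [hIof, gauss_int c hc0, Complex.ofReal_cpow h1c.le]
  push_cast
  ring_nf
end
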